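/- arXiv:1602.04623 — 3 statements merged into one kernel-verified Lean document; each statement's English description precedes it below -/
import Mathlib

section
/- In a diamond-free graph with at least one edge, the set of all maximal cliques of size at least 2 forms a minimum edge clique cover, i.e., θ_e(G) equals the number of maximal cliques of G containing at least one edge. -/
/-- A digraph (given by its arc relation) is acyclic if it has no directed cycle. -/
def Digraph.Acyclic {W : Type*} (A : W → W → Prop) : Prop :=
  ∀ v, ¬ Relation.TransGen A v v

/-- The competition graph of a digraph: distinct `x`, `y` are adjacent iff
they have a common out-neighbor. -/
def competitionGraph {W : Type*} (A : W → W → Prop) : SimpleGraph W where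
  Adj x y := x ≠ y ∧ ∃ z, A x z ∧ A y z
  symm := by
    constructor
    rintro x y ⟨h, z, hx, hy⟩
    exact ⟨h.symm, z, hy, hx⟩
  loopless := by
    constructor
    rintro x ⟨h, -⟩
    exact h rfl

/-- `G` together with `k` additional isolated vertices. -/
def addIsolated {V : Type*} (G : SimpleGraph V) (k : ℕ) : SimpleGraph (V ⊕ Fin k) where
  Adj x y := ∃ u v, G.Adj u v ∧ x = Sum.inl u ∧ y = Sum.inl v
  symm := by
    constructor
    rintro x y ⟨u, v, h, rfl, rfl⟩
    exact ⟨v, u, h.symm, rfl, rfl⟩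
  loopless := by
    constructor
    rintro x ⟨u, v, h, rfl, hy⟩
    exact G.loopless.irrefl u (Sum.inl.inj hy ▸ h)

/-- `F` is an edge clique cover of `G`. -/
def IsEdgeCliqueCover {V : Type*} (G : SimpleGraph V) (F : Finset (Set V)) : Prop :=
  (∀ C ∈ F, G.IsClique C) ∧ ∀ u v, G.Adj u v → ∃ C ∈ F, u ∈ C ∧ v ∈ C

/-- The edge clique cover number `θ_e(G)`. -/
noncomputable def eccNumber {V : Type*} (G : SimpleGraph V) : ℕ :=
  sInf {n | ∃ F : Finset (Set V), IsEdgeCliqueCover G F ∧ F.card = n}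

/-- An acyclic digraph `A` on `V ⊕ Fin k` realizes `G` with `k` added isolated vertices
if its competition graph is `G` together with `k` isolated vertices. -/
def Realizes {V : Type*} (G : SimpleGraph V) (k : ℕ)
    (A : (V ⊕ Fin k) → (V ⊕ Fin k) → Prop) : Prop :=
  Digraph.Acyclic A ∧ competitionGraph A = addIsolated G k

/-- The competition number `k(G)`. -/
noncomputable def compNumber {V : Type*} (G : SimpleGraph V) : ℕ :=
  sInf {k | ∃ A : (V ⊕ Fin k) → (V ⊕ Fin k) → Prop, Realizes G k A}

/-- The primary predator index `p(G)`: the maximum number of in-degree-0 vertices over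
all acyclic digraphs whose competition graph is `G` plus `k(G)` isolated vertices. -/
noncomputable def predatorIndex {V : Type*} (G : SimpleGraph V) : ℕ :=
  sSup {n | ∃ A : (V ⊕ Fin (compNumber G)) → (V ⊕ Fin (compNumber G)) → Prop,
    Realizes G (compNumber G) A ∧ {v | ∀ u, ¬ A u v}.ncard = n}

/-- `C` is a maximal clique of `G`. -/
def IsMaximalClique {V : Type*} (G : SimpleGraph V) (C : Set V) : Prop :=
  G.IsClique C ∧ ∀ D : Set V, G.IsClique D → C ⊆ D → C = D

/-- The acyclic digraph `A` accompanies the minimum edge clique cover `𝒞`. -/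
def Accompanies {V : Type*} (G : SimpleGraph V) (𝒞 : Finset (Set V))
    (A : (V ⊕ Fin (compNumber G)) → (V ⊕ Fin (compNumber G)) → Prop) : Prop :=
  Realizes G (compNumber G) A ∧
  ∃ w : 𝒞 → (V ⊕ Fin (compNumber G)), Function.Injective w ∧
    (∀ C : 𝒞, ∀ v ∈ (C : Set V), A (Sum.inl v) (w C)) ∧
    {x | ∃ u, A u x} = Set.range w

/-- `𝒞` is an effective competition cover of `G`. -/
def IsEffectiveCompetitionCover {V : Type*} (G : SimpleGraph V) (𝒞 : Finset (Set V)) : Prop :=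
  IsEdgeCliqueCover G 𝒞 ∧ 𝒞.card = eccNumber G ∧
  (∀ C ∈ 𝒞, IsMaximalClique G C) ∧
  ∃ A : (V ⊕ Fin (compNumber G)) → (V ⊕ Fin (compNumber G)) → Prop, Accompanies G 𝒞 A

/-- The diamond graph: `K₄` minus the edge between vertices `2` and `3`. -/
def diamondGraph : SimpleGraph (Fin 4) where
  Adj i j := i ≠ j ∧ ¬(i = 2 ∧ j = 3) ∧ ¬(i = 3 ∧ j = 2)
  symm := by
    constructor
    rintro i j ⟨h, h1, h2⟩
    exact ⟨h.symm, fun ⟨a, b⟩ => h2 ⟨b, a⟩, fun ⟨a, b⟩ => h1 ⟨b, a⟩⟩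
  loopless := by
    constructor
    rintro i ⟨h, -⟩
    exact h rfl

/-- `G` contains `H` as an induced subgraph. -/
def ContainsInduced {V W : Type*} (G : SimpleGraph V) (H : SimpleGraph W) : Prop :=
  ∃ f : W ↪ V, ∀ a b, G.Adj (f a) (f b) ↔ H.Adj a b

/-- `G` is diamond-free: it has no induced diamond. -/
def DiamondFree {V : Type*} (G : SimpleGraph V) : Prop :=
  ¬ ContainsInduced G diamondGraph

/-- `G` is chordal: it has no induced cycle of length at least `4`. -/
def Chordal {V : Type*} (G : SimpleGraph V) : Prop :=
  ∀ n, 4 ≤ n → ¬ ContainsInduced G (SimpleGraph.cycleGraph n)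

/-- The edge `uv` is occupied by `C`: `C` is the unique maximal clique covering `uv`. -/
def Occupies {V : Type*} (G : SimpleGraph V) (C : Set V) (u v : V) : Prop :=
  G.Adj u v ∧ IsMaximalClique G C ∧ u ∈ C ∧ v ∈ C ∧
    ∀ C' : Set V, IsMaximalClique G C' → u ∈ C' → v ∈ C' → C' = C


open Classical in
lemma aux_exists_max {V : Type*} [Fintype V] (G : SimpleGraph V) {D : Set V}
    (hD : G.IsClique D) : ∃ C, IsMaximalClique G C ∧ D ⊆ C := by
  have hfin : {E : Set V | G.IsClique E ∧ D ⊆ E}.Finite := Set.toFinite _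
  obtain ⟨C, hCmem, hCmax⟩ := Set.Finite.exists_maximalFor Set.ncard _ hfin ⟨D, hD, subset_rfl⟩
  refine ⟨C, ⟨hCmem.1, fun E hE hCE => ?_⟩, hCmem.2⟩
  have hEmem : E ∈ {E : Set V | G.IsClique E ∧ D ⊆ E} := ⟨hE, hCmem.2.trans hCE⟩
  have hle : C.ncard ≤ E.ncard := Set.ncard_le_ncard hCE E.toFinite
  exact Set.eq_of_subset_of_ncard_le hCE (hCmax hEmem hle) E.toFinite

lemma aux_uniq {V : Type*} (G : SimpleGraph V) (hdf : DiamondFree G) {u v : V}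
    {C C' : Set V} (huv : G.Adj u v) (hC : IsMaximalClique G C) (hC' : IsMaximalClique G C')
    (hu : u ∈ C) (hv : v ∈ C) (hu' : u ∈ C') (hv' : v ∈ C') : C = C' := by
  by_contra hne
  have hsub : ¬ C ⊆ C' := fun h => hne (hC.2 C' hC'.1 h)
  obtain ⟨a, ha, ha'⟩ := Set.not_subset.1 hsub
  have hau : a ≠ u := fun h => ha' (h ▸ hu')
  have hav : a ≠ v := fun h => ha' (h ▸ hv')
  have hAau : G.Adj a u := hC.1 ha hu hau
  have hAav : G.Adj a v := hC.1 ha hv hav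
  -- a is not adjacent to all of C'
  have : ¬ ∀ b ∈ C', b ≠ a → G.Adj a b := by
    intro hall
    have hclq : G.IsClique (insert a C') := hC'.1.insert fun b hb hba => hall b hb hba.symm
    have := hC'.2 _ hclq (Set.subset_insert a C')
    exact ha' (this ▸ Set.mem_insert a C')
  push_neg at this
  obtain ⟨b, hb, hba, hnab⟩ := this
  have hbu : b ≠ u := fun h => hnab (h ▸ hAau)
  have hbv : b ≠ v := fun h => hnab (h ▸ hAav)
  have hAub : G.Adj u b := hC'.1 hu' hb hbu.symm
  have hAvb : G.Adj v b := hC'.1 hv' hb hbv.symm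
  apply hdf
  have hinj : Function.Injective (![u, v, a, b]) := by
    intro i j hij
    fin_cases i <;> fin_cases j <;> simp_all <;>
      first
        | rfl
        | exact absurd hij huv.ne
        | exact absurd hij huv.ne'
        | exact absurd hij hau.symm
        | exact absurd hij hau
        | exact absurd hij hav.symm
        | exact absurd hij hav
        | exact absurd hij hbu.symm
        | exact absurd hij hbu
        | exact absurd hij hbv.symm
        | exact absurd hij hbv
        | exact absurd hij hba
        | exact absurd hij hba.symm
  refine ⟨⟨![u, v, a, b], hinj⟩, fun i j => ?_⟩
  have hnab' : ¬ G.Adj b a := fun h => hnab h.symm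
  fin_cases i <;> fin_cases j <;>
    simp [diamondGraph] <;>
    first
      | exact G.irrefl
      | exact huv
      | exact huv.symm
      | exact hAau
      | exact hAau.symm
      | exact hAav
      | exact hAav.symm
      | exact hAub
      | exact hAub.symm
      | exact hAvb
      | exact hAvb.symm
      | exact hnab
      | exact hnab'
      | exact fun h => absurd h hnab
      | exact fun h => absurd h hnab'

/-- in a diamond-free graph with at least one edge, the set of all maximal
cliques of size at least `2` is a minimum edge clique cover. -/
theorem stmt12 {V : Type*} [Fintype V] (G : SimpleGraph V) (hdf : DiamondFree G)
    (hedge : ∃ u v : V, G.Adj u v) :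
    ∃ 𝒞 : Finset (Set V), (↑𝒞 : Set (Set V)) = {C | IsMaximalClique G C ∧ 2 ≤ C.ncard} ∧
      IsEdgeCliqueCover G 𝒞 ∧ 𝒞.card = eccNumber G := by
  classical
  have hMfin : {C : Set V | IsMaximalClique G C ∧ 2 ≤ C.ncard}.Finite := Set.toFinite _
  refine ⟨hMfin.toFinset, hMfin.coe_toFinset, ?_, ?_⟩
  · constructor
    · intro C hC
      exact ((hMfin.mem_toFinset.1 hC).1).1
    · intro u v huv
      obtain ⟨C, hCmax, hsub⟩ := aux_exists_max G (SimpleGraph.isClique_pair.mpr (fun _ => huv))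
      have h2 : 2 ≤ C.ncard := by
        have := Set.ncard_le_ncard hsub C.toFinite
        rwa [Set.ncard_pair huv.ne] at this
      exact ⟨C, hMfin.mem_toFinset.2 ⟨hCmax, h2⟩,
        hsub (Set.mem_insert u {v}), hsub (Set.mem_insert_of_mem u rfl)⟩
  · -- card = eccNumber
    have hcover : IsEdgeCliqueCover G hMfin.toFinset := by
      constructor
      · intro C hC; exact ((hMfin.mem_toFinset.1 hC).1).1
      · intro u v huv
        obtain ⟨C, hCmax, hsub⟩ := aux_exists_max G (SimpleGraph.isClique_pair.mpr (fun _ => huv))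
        have h2 : 2 ≤ C.ncard := by
          have := Set.ncard_le_ncard hsub C.toFinite
          rwa [Set.ncard_pair huv.ne] at this
        exact ⟨C, hMfin.mem_toFinset.2 ⟨hCmax, h2⟩,
          hsub (Set.mem_insert u {v}), hsub (Set.mem_insert_of_mem u rfl)⟩
    refine le_antisymm ?_ (Nat.sInf_le ⟨hMfin.toFinset, hcover, rfl⟩)
    refine le_csInf ⟨_, hMfin.toFinset, hcover, rfl⟩ ?_
    rintro n ⟨F, hF, rfl⟩
    -- injection from maximal cliques into F
    have key : ∀ C : Set V, ∃ D : Set V, C ∈ hMfin.toFinset →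
        D ∈ F ∧ ∃ u v, G.Adj u v ∧ u ∈ C ∧ v ∈ C ∧ u ∈ D ∧ v ∈ D := by
      intro C
      by_cases hC : C ∈ hMfin.toFinset
      · obtain ⟨hCmax, h2⟩ := hMfin.mem_toFinset.1 hC
        obtain ⟨u, hu, v, hv, huv⟩ := (Set.one_lt_ncard C.toFinite).1 h2
        have hadj : G.Adj u v := hCmax.1 hu hv huv
        obtain ⟨D, hD, huD, hvD⟩ := hF.2 u v hadj
        exact ⟨D, fun _ => ⟨hD, u, v, hadj, hu, hv, huD, hvD⟩⟩
      · exact ⟨∅, fun h => absurd h hC⟩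
    choose f hf using key
    refine Finset.card_le_card_of_injOn f (fun C hC => (hf C hC).1) ?_
    intro C hC C' hC' hfe
    obtain ⟨hDF, u, v, huv, huC, hvC, huD, hvD⟩ := hf C hC
    obtain ⟨hDF', u', v', huv', huC', hvC', huD', hvD'⟩ := hf C' hC'
    obtain ⟨hCmax, -⟩ := hMfin.mem_toFinset.1 hC
    obtain ⟨hCmax', -⟩ := hMfin.mem_toFinset.1 hC'
    have hDclq : G.IsClique (f C) := hF.1 _ hDF
    obtain ⟨E, hEmax, hsubE⟩ := aux_exists_max G hDclq
    have h1 : E = C := aux_uniq G hdf huv hEmax hCmax (hsubE huD) (hsubE hvD) huC hvC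
    have h2 : E = C' := aux_uniq G hdf huv' hEmax hCmax'
      (hsubE (hfe ▸ huD')) (hsubE (hfe ▸ hvD')) huC' hvC'
    rw [← h1, h2]
end

section
/- Let G be a graph with an effective competition cover 𝒞 = {C_1,…,C_{θ_e(G)}} and let D be a digraph accompanying 𝒞. Then |V(D)| = p(G) + θ_e(G), and the number of in-degree-0 vertices of D equals p(G). -/
/-- for a digraph `A` accompanying an effective competition cover `𝒞` of `G`,
`|V(D)| = p(G) + θ_e(G)` and the number of in-degree-0 vertices of `D` is `p(G)`. -/
theorem stmt13 {V : Type*} [Fintype V] (G : SimpleGraph V) (𝒞 : Finset (Set V))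
    (hecc : IsEffectiveCompetitionCover G 𝒞)
    (A : (V ⊕ Fin (compNumber G)) → (V ⊕ Fin (compNumber G)) → Prop)
    (hA : Accompanies G 𝒞 A) :
    Fintype.card (V ⊕ Fin (compNumber G)) = predatorIndex G + eccNumber G ∧
      {v | ∀ u, ¬ A u v}.ncard = predatorIndex G := by
  classical
  obtain ⟨hcover, hcard, hmax, -⟩ := hecc
  obtain ⟨hreal, w, hwinj, hwarc, hwrange⟩ := hA
  set N := Fintype.card (V ⊕ Fin (compNumber G)) with hN
  have hcompl : ∀ A' : (V ⊕ Fin (compNumber G)) → (V ⊕ Fin (compNumber G)) → Prop,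
      {v | ∀ u, ¬ A' u v} = {x | ∃ u, A' u x}ᶜ := by
    intro A'; ext x; simp [not_exists]
  have hsum : ∀ s : Set (V ⊕ Fin (compNumber G)), s.ncard + sᶜ.ncard = N := by
    intro s
    rw [Set.ncard_add_ncard_compl s (Set.toFinite _) (Set.toFinite _),
      Nat.card_eq_fintype_card]
  -- key bound: for any realizing digraph, θ_e ≤ number of nonzero in-degree vertices
  have key : ∀ A' : (V ⊕ Fin (compNumber G)) → (V ⊕ Fin (compNumber G)) → Prop,
      Realizes G (compNumber G) A' → eccNumber G ≤ {x | ∃ u, A' u x}.ncard := by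
    intro A' hA'
    have hadjiff : ∀ x y, (competitionGraph A').Adj x y ↔ (addIsolated G (compNumber G)).Adj x y := by
      intro x y; rw [hA'.2]
    have hadj : ∀ a b : V, a ≠ b → ((∃ z, A' (Sum.inl a) z ∧ A' (Sum.inl b) z) ↔ G.Adj a b) := by
      intro a b hab
      constructor
      · intro hz
        have h1 : (competitionGraph A').Adj (Sum.inl a) (Sum.inl b) :=
          ⟨fun h => hab (Sum.inl.inj h), hz⟩
        obtain ⟨u, v, huv, hu, hv⟩ := (hadjiff _ _).1 h1
        rw [Sum.inl.inj hu, Sum.inl.inj hv]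
        exact huv
      · intro h
        have h2 : (addIsolated G (compNumber G)).Adj (Sum.inl a) (Sum.inl b) := ⟨a, b, h, rfl, rfl⟩
        exact ((hadjiff _ _).2 h2).2
    set S : Finset (V ⊕ Fin (compNumber G)) := (Set.toFinite {x | ∃ u, A' u x}).toFinset with hS
    set F : Finset (Set V) := S.image (fun z => {u : V | A' (Sum.inl u) z}) with hF
    have hFcover : IsEdgeCliqueCover G F := by
      constructor
      · intro C hC
        obtain ⟨z, hz, rfl⟩ := Finset.mem_image.1 hC
        intro a ha b hb hab
        exact (hadj a b hab).1 ⟨z, ha, hb⟩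
      · intro u v huv
        have h2 : (addIsolated G (compNumber G)).Adj (Sum.inl u) (Sum.inl v) := ⟨u, v, huv, rfl, rfl⟩
        obtain ⟨-, z, hz1, hz2⟩ := (hadjiff _ _).2 h2
        refine ⟨{t : V | A' (Sum.inl t) z}, Finset.mem_image.2 ⟨z, ?_, rfl⟩, hz1, hz2⟩
        simp only [hS, Set.Finite.mem_toFinset, Set.mem_setOf_eq]
        exact ⟨Sum.inl u, hz1⟩
    calc eccNumber G ≤ F.card := Nat.sInf_le ⟨F, hFcover, rfl⟩
      _ ≤ S.card := Finset.card_image_le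
      _ = {x | ∃ u, A' u x}.ncard := (Set.ncard_eq_toFinset_card _ _).symm
  -- number of nonzero in-degree vertices of A is 𝒞.card = θ_e(G)
  have hnz : {x | ∃ u, A u x}.ncard = eccNumber G := by
    rw [hwrange, ← Set.image_univ, Set.ncard_image_of_injective _ hwinj,
      Set.ncard_univ, Nat.card_eq_fintype_card, Fintype.card_coe, hcard]
  have htle : eccNumber G ≤ N := by
    rw [← hnz]
    have := hsum {x | ∃ u, A u x}
    omega
  have hzA : {v | ∀ u, ¬ A u v}.ncard = N - eccNumber G := by
    rw [hcompl A]
    have := hsum {x | ∃ u, A u x}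
    omega
  have hmem : N - eccNumber G ∈ {n | ∃ A' : (V ⊕ Fin (compNumber G)) → (V ⊕ Fin (compNumber G)) → Prop,
      Realizes G (compNumber G) A' ∧ {v | ∀ u, ¬ A' u v}.ncard = n} := ⟨A, hreal, hzA⟩
  have hub : ∀ n ∈ {n | ∃ A' : (V ⊕ Fin (compNumber G)) → (V ⊕ Fin (compNumber G)) → Prop,
      Realizes G (compNumber G) A' ∧ {v | ∀ u, ¬ A' u v}.ncard = n}, n ≤ N - eccNumber G := by
    rintro n ⟨A', hA', rfl⟩
    rw [hcompl A']
    have h1 := hsum {x | ∃ u, A' u x}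
    have h2 := key A' hA'
    omega
  have hp : predatorIndex G = N - eccNumber G := by
    apply le_antisymm
    · exact csSup_le ⟨_, hmem⟩ hub
    · exact le_csSup ⟨N - eccNumber G, hub⟩ hmem
  refine ⟨?_, by rw [hzA, hp]⟩
  rw [hp]
  omega
end

section
/- Let G be a graph with an effective competition cover 𝒞. Then the cliques in 𝒞 can be labeled C_1,…,C_{θ_e(G)} so that for every k with 1 ≤ k ≤ θ_e(G), p(G) ≥ |C_k ∪ C_{k+1} ∪ ⋯ ∪ C_{θ_e(G)}| − θ_e(G) + k. -/
universe u

/-- Topological sort of a finite acyclic relation. -/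
lemma topoSortAux (n : ℕ) : ∀ (α : Type u) [Fintype α] (r : α → α → Prop),
    (∀ a, ¬ Relation.TransGen r a a) → Fintype.card α = n →
    ∃ f : α → Fin n, Function.Bijective f ∧ ∀ a b, r a b → f a < f b := by
  induction n with
  | zero =>
    intro α _ r _ hcard
    have : IsEmpty α := Fintype.card_eq_zero_iff.mp hcard
    exact ⟨fun a => isEmptyElim a, ⟨fun a => isEmptyElim a, fun i => i.elim0⟩,
      fun a => isEmptyElim a⟩
  | succ n ih =>
    intro α _ r hr hcard
    classical
    have hne : Nonempty α := Fintype.card_pos_iff.mp (by omega)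
    haveI : IsTrans α (flip (Relation.TransGen r)) :=
      ⟨fun a b c hab hbc => Relation.TransGen.trans hbc hab⟩
    haveI : IsIrrefl α (flip (Relation.TransGen r)) := ⟨fun a h => hr a h⟩
    have hwf : WellFounded (flip (Relation.TransGen r)) :=
      Finite.wellFounded_of_trans_of_irrefl _
    obtain ⟨m, -, hm⟩ := hwf.has_min Set.univ (Set.univ_nonempty)
    have hm' : ∀ x, ¬ Relation.TransGen r m x := fun x h => hm x trivial h
    have hcard' : Fintype.card {a : α // a ≠ m} = n := by
      have := Fintype.card_subtype_compl (fun a : α => a = m)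
      rw [Fintype.card_subtype_eq] at this
      simp only [ne_eq]
      omega
    have hacyc : ∀ a : {a : α // a ≠ m},
        ¬ Relation.TransGen (fun a b : {a : α // a ≠ m} => r a.1 b.1) a a := by
      intro a h
      exact hr a.1 (Relation.TransGen.lift Subtype.val (fun x y hxy => hxy) _ _ h)
    obtain ⟨f', hf'bij, hf'mono⟩ := ih {a : α // a ≠ m} _ hacyc hcard'
    refine ⟨fun a => if h : a = m then Fin.last n else (f' ⟨a, h⟩).castSucc, ⟨?_, ?_⟩, ?_⟩
    · intro a b hab
      by_cases ha : a = m <;> by_cases hb : b = m <;> simp [ha, hb] at hab ⊢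
      · exact absurd hab.symm (Fin.ne_of_lt (Fin.castSucc_lt_last _))
      · have := hf'bij.1 hab
        exact Subtype.ext_iff.mp this
    · intro j
      by_cases hj : j = Fin.last n
      · exact ⟨m, by simp [hj]⟩
      · obtain ⟨i, rfl⟩ := Fin.exists_castSucc_eq.mpr hj
        obtain ⟨a, ha⟩ := hf'bij.2 i
        exact ⟨a.1, by simp [a.2, ha]⟩
    · intro a b hab
      by_cases ha : a = m
      · exact absurd (Relation.TransGen.single (ha ▸ hab)) (hm' b)
      by_cases hb : b = m
      · simp [ha, hb, Fin.castSucc_lt_last]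
      · simpa [ha, hb, Fin.castSucc_lt_castSucc_iff] using hf'mono ⟨a, ha⟩ ⟨b, hb⟩ hab

/-- the cliques of an effective competition cover can be labeled
`C_1, …, C_{θ_e(G)}` (here `0`-indexed by `Fin (θ_e G)`) so that for every `k`,
`p(G) ≥ |C_k ∪ ⋯ ∪ C_{θ_e(G)}| − θ_e(G) + k`. -/
theorem stmt15 {V : Type*} [Fintype V] (G : SimpleGraph V) (𝒞 : Finset (Set V))
    (hecc : IsEffectiveCompetitionCover G 𝒞) :
    ∃ σ : Fin (eccNumber G) → Set V, Function.Injective σ ∧ (∀ i, σ i ∈ 𝒞) ∧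
      (∀ C ∈ 𝒞, ∃ i, σ i = C) ∧
      ∀ k : Fin (eccNumber G),
        ((⋃ i ∈ {i : Fin (eccNumber G) | k ≤ i}, σ i).ncard : ℤ) - (eccNumber G : ℤ)
            + ((k : ℕ) + 1 : ℤ) ≤ (predatorIndex G : ℤ) := by
  classical
  obtain ⟨hcov, hcard, hmax, A, hReal, w, hwinj, hwarc, hwset⟩ := hecc
  -- the relation: D → C when the prey vertex of D is a vertex of C
  set r : ↥𝒞 → ↥𝒞 → Prop := fun D C => ∃ v, w D = Sum.inl v ∧ v ∈ (C : Set V) with hrdef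
  have hacyc : ∀ C, ¬ Relation.TransGen r C C := by
    intro C h
    refine hReal.1 (w C) (Relation.TransGen.lift w (fun D C hDC => ?_) _ _ h)
    obtain ⟨v, hv1, hv2⟩ := hDC
    show A (w D) (w C)
    rw [hv1]
    exact hwarc C v hv2
  have hcardcoe : Fintype.card ↥𝒞 = eccNumber G := by
    rw [Fintype.card_coe]; exact hcard
  obtain ⟨f, hfbij, hfmono⟩ := topoSortAux (eccNumber G) ↥𝒞 r hacyc hcardcoe
  set g : ↥𝒞 → Fin (eccNumber G) := fun C => (f C).rev with hgdef
  have hgbij : Function.Bijective g := Fin.rev_involutive.bijective.comp hfbij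
  have hgmono : ∀ D C, r D C → g C < g D := by
    intro D C h
    simpa [hgdef, Fin.rev_lt_rev] using hfmono D C h
  set e : ↥𝒞 ≃ Fin (eccNumber G) := Equiv.ofBijective g hgbij with hedef
  -- the zero in-degree set
  set Z : Set (V ⊕ Fin (compNumber G)) := {x | ∀ u, ¬ A u x} with hZdef
  have hZ : Z = (Set.range w)ᶜ := by
    rw [← hwset]; ext x; simp [hZdef]
  have hp : Z.ncard ≤ predatorIndex G := by
    refine le_csSup ⟨Fintype.card (V ⊕ Fin (compNumber G)), ?_⟩ ⟨A, hReal, rfl⟩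
    rintro n ⟨B, -, rfl⟩
    simpa [Set.ncard_univ, Nat.card_eq_fintype_card] using
      Set.ncard_le_ncard (Set.subset_univ {v | ∀ u, ¬ B u v}) Set.finite_univ
  refine ⟨fun i => ((e.symm i : ↥𝒞) : Set V), ?_, fun i => (e.symm i).2, ?_, fun k => ?_⟩
  · intro i j h
    exact e.symm.injective (Subtype.ext h)
  · intro C hC
    refine ⟨e ⟨C, hC⟩, ?_⟩
    show ((e.symm (e ⟨C, hC⟩) : ↥𝒞) : Set V) = C
    rw [e.symm_apply_apply]
  · set U : Set V := ⋃ i ∈ {i : Fin (eccNumber G) | k ≤ i},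
      ((e.symm i : ↥𝒞) : Set V) with hUdef
    have hU1 : U.ncard = (Sum.inl '' U : Set (V ⊕ Fin (compNumber G))).ncard :=
      (Set.ncard_image_of_injective U Sum.inl_injective).symm
    have hsplit : (Sum.inl '' U : Set (V ⊕ Fin (compNumber G))).ncard =
        (Sum.inl '' U ∩ Z).ncard + (Sum.inl '' U \ Z).ncard :=
      (Set.ncard_inter_add_ncard_diff_eq_ncard _ _ (Set.toFinite _)).symm
    have h1 : (Sum.inl '' U ∩ Z).ncard ≤ Z.ncard :=
      Set.ncard_le_ncard Set.inter_subset_right (Set.toFinite _)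
    have h2sub : (Sum.inl '' U \ Z) ⊆ w '' {D | k < g D} := by
      rintro x ⟨⟨v, hvU, rfl⟩, hxZ⟩
      have hxr : Sum.inl v ∈ Set.range w := by
        rw [hZ] at hxZ
        simpa using hxZ
      obtain ⟨D, hD⟩ := hxr
      simp only [hUdef, Set.mem_iUnion, Set.mem_setOf_eq, exists_prop] at hvU
      obtain ⟨i, hki, hvi⟩ := hvU
      have hlt := hgmono D (e.symm i) ⟨v, hD, hvi⟩
      rw [show g (e.symm i) = i from e.apply_symm_apply i] at hlt
      exact ⟨D, lt_of_le_of_lt hki hlt, hD⟩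
    have h2 : (Sum.inl '' U \ Z).ncard ≤ eccNumber G - 1 - (k : ℕ) := by
      calc (Sum.inl '' U \ Z).ncard ≤ (w '' {D | k < g D}).ncard :=
            Set.ncard_le_ncard h2sub (Set.toFinite _)
        _ ≤ {D | k < g D}.ncard := Set.ncard_image_le (Set.toFinite _)
        _ = (g '' {D | k < g D}).ncard :=
            (Set.ncard_image_of_injective _ hgbij.1).symm
        _ = {j : Fin (eccNumber G) | k < j}.ncard := by
            congr 1
            rw [show {D | k < g D} = g ⁻¹' {j | k < j} from rfl,
              Set.image_preimage_eq _ hgbij.2]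
        _ = eccNumber G - 1 - (k : ℕ) := by
            rw [show {j : Fin (eccNumber G) | k < j} = ↑(Finset.Ioi k) by ext j; simp,
              Set.ncard_coe_finset, Fin.card_Ioi]
    have hk : (k : ℕ) < eccNumber G := k.isLt
    have hfinal : U.ncard ≤ predatorIndex G + (eccNumber G - 1 - (k : ℕ)) := by omega
    omega
end
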